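/- arXiv:1503.00044 — 2 statements merged into one kernel-verified Lean document; each statement's English description precedes it below -/
import Mathlib

section
/- For every natural number k, the total number of directed paths in the action graph A_k whose terminal vertex is labeled k (counting, for each vertex labeled k, the trivial path at that vertex) equals the (k+1)st Catalan number C_{k+1}. -/
/-- Vertices of action graphs: the root (labeled 0), or a vertex created at some
step, recorded together with its label and the path (head and tail of the vertex
sequence) that created it. -/
inductive AGVert : Type
  | root : AGVert
  | node (lbl : ℕ) (head : AGVert) (tail : List AGVert) : AGVert

/-- The label of a vertex. -/
def AGVert.label : AGVert → ℕ
  | .root => 0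
  | .node l _ _ => l

/-- `IsPath E a l` says that `a :: l` is the vertex sequence of a directed path in a
graph with edge set `E` (the trivial path at `a` when `l = []`). -/
def IsPath (E : Set (AGVert × AGVert)) (a : AGVert) (l : List AGVert) : Prop :=
  List.Chain (fun x y => (x, y) ∈ E) a l

/-- The terminal vertex of the path with vertex sequence `a :: l`. -/
def pathLast (a : AGVert) (l : List AGVert) : AGVert :=
  (a :: l).getLast (List.cons_ne_nil a l)

/-- The action graph `A k`, given by its set of vertices together with its set of
(nontrivial, directed) edges.  `A 0` has one vertex (labeled 0) and no nontrivial
edges; `A (k+1)` is obtained from `A k` by adjoining, for each directed path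
(including trivial ones) in `A k` whose terminal vertex is labeled `k`, a new vertex
labeled `k+1` and a new edge from the initial vertex of the path to the new vertex. -/
def actionGraph : ℕ → Set AGVert × Set (AGVert × AGVert)
  | 0 => ({AGVert.root}, ∅)
  | k + 1 =>
    let G := actionGraph k
    (G.1 ∪ { w | ∃ a l, a ∈ G.1 ∧ IsPath G.2 a l ∧ (pathLast a l).label = k ∧
        w = AGVert.node (k + 1) a l },
     G.2 ∪ { e | ∃ a l, a ∈ G.1 ∧ IsPath G.2 a l ∧ (pathLast a l).label = k ∧
        e = (a, AGVert.node (k + 1) a l) })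


open Finset

/-- `dd k n` = number of paths in `A k` with terminal label `k` and at least `n` edges. -/
def dd : ℕ → ℕ → ℕ
  | 0, 0 => 1
  | 0, _ + 1 => 0
  | k + 1, 0 => dd k 0 + ∑ t ∈ Finset.Icc 0 k, dd k t
  | k + 1, n + 1 => ∑ t ∈ Finset.Icc n k, dd k t

lemma dd_succ_succ (k n : ℕ) : dd (k + 1) (n + 1) = ∑ t ∈ Finset.Icc n k, dd k t := by
  rw [dd]

lemma dd_succ_zero (k : ℕ) : dd (k + 1) 0 = dd k 0 + dd (k + 1) 1 := by
  rw [dd, dd_succ_succ]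

lemma dd_eq_zero {k n : ℕ} (h : k < n) : dd k n = 0 := by
  induction k generalizing n with
  | zero => obtain ⟨m, rfl⟩ := Nat.exists_eq_add_of_lt h; rw [Nat.zero_add, dd]
  | succ k ih =>
    obtain ⟨n, rfl⟩ : ∃ m, n = m + 1 := ⟨n - 1, by omega⟩
    rw [dd_succ_succ]
    apply Finset.sum_eq_zero
    intro t ht
    simp only [Finset.mem_Icc] at ht
    exact ih (by omega)

lemma dd_pascal (k n : ℕ) (h : n ≤ k) :
    dd (k + 1) (n + 1) = dd k n + dd (k + 1) (n + 2) := by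
  rw [dd_succ_succ, dd_succ_succ, Finset.Icc_eq_cons_Ioc h, Finset.sum_cons, ← Finset.Icc_add_one_left_eq_Ioc]

lemma catalan_succ_range (n : ℕ) :
    catalan (n + 1) = ∑ i ∈ Finset.range (n + 1), catalan i * catalan (n - i) := by
  rw [catalan_succ, Finset.sum_range]

lemma dd_expand {j : ℕ}
    (hj : ∀ n ≤ j, dd (j + 1) (n + 1) = ∑ i ∈ range (j - n + 1), catalan i * dd (j - i) n)
    {n : ℕ} (hn : n ≤ j) :
    ∑ t ∈ Finset.Icc n j, dd (j + 1) (t + 1) =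
      ∑ i ∈ range (j - n + 1), catalan i * dd (j + 1 - i) (n + 1) := by
  have h1 : ∑ t ∈ Finset.Icc n j, dd (j + 1) (t + 1) =
      ∑ t ∈ Finset.Icc n j, ∑ i ∈ range (j - t + 1), catalan i * dd (j - i) t :=
    Finset.sum_congr rfl fun t ht => hj t (Finset.mem_Icc.mp ht).2
  rw [h1]
  rw [Finset.sum_comm' (t' := range (j - n + 1)) (s' := fun i => Finset.Icc n (j - i))
    (by intro t i; simp only [Finset.mem_Icc, Finset.mem_range]; omega)]
  refine Finset.sum_congr rfl fun i hi => ?_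
  simp only [Finset.mem_range] at hi
  rw [← Finset.mul_sum]
  congr 1
  have : j + 1 - i = (j - i) + 1 := by omega
  rw [this, dd_succ_succ]

lemma sum_Icc_succ_shift (n j : ℕ) (f : ℕ → ℕ) :
    ∑ t ∈ Finset.Icc (n + 1) (j + 1), f t = ∑ t ∈ Finset.Icc n j, f (t + 1) := by
  rw [← Finset.image_add_right_Icc n j 1, Finset.sum_image (by intro a _ b _ h; simpa using h)]

lemma dd_phi : ∀ j : ℕ, dd j 0 = catalan (j + 1) ∧
    ∀ n ≤ j, dd (j + 1) (n + 1) = ∑ i ∈ range (j - n + 1), catalan i * dd (j - i) n := by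
  intro j
  induction j using Nat.strong_induction_on with
  | _ j ih =>
  match j with
  | 0 =>
    constructor
    · show dd 0 0 = catalan (0 + 1)
      simp [dd]
    · intro n hn
      interval_cases n
      rw [dd_succ_succ]
      show ∑ t ∈ Finset.Icc 0 0, dd 0 t = ∑ i ∈ range 1, catalan i * dd (0 - i) 0
      rw [Finset.Icc_self, Finset.sum_singleton, Finset.sum_range_one]
      simp [dd]
  | j + 1 =>
    have ihj := ih j (Nat.lt_succ_self j)
    have G : ∀ m, m ≤ j → dd m 0 = catalan (m + 1) := fun m hm =>
      (ih m (Nat.lt_succ_of_le hm)).1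
    have hcat : catalan (j + 2) =
        (∑ i ∈ range (j + 1), catalan i * catalan (j - i + 1)) + catalan (j + 1) := by
      rw [catalan_succ_range (j + 1), Finset.sum_range_succ, Nat.sub_self, catalan_zero,
        mul_one]
      congr 1
      refine Finset.sum_congr rfl fun i hi => ?_
      rw [Finset.mem_range] at hi
      congr 2
      omega
    have h1 : dd (j + 1) 1 = ∑ i ∈ range (j + 1), catalan i * catalan (j - i + 1) := by
      have := ihj.2 0 (Nat.zero_le j)
      rw [Nat.sub_zero] at this
      rw [this]
      exact Finset.sum_congr rfl fun i hi => by
        rw [Finset.mem_range] at hi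
        rw [G (j - i) (by omega)]
    have P1 : dd (j + 1) 0 = catalan (j + 2) := by
      rw [dd_succ_zero, ihj.1, h1, hcat, Nat.add_comm]
    refine ⟨P1, ?_⟩
    intro n hn
    match n with
    | nn + 1 =>
      have hnn : nn ≤ j := by omega
      rw [dd_succ_succ, sum_Icc_succ_shift, dd_expand ihj.2 hnn]
      have e1 : j + 1 - (nn + 1) = j - nn := by omega
      rw [e1]
    | 0 =>
      rw [dd_succ_succ]
      have split : ∑ t ∈ Finset.Icc 0 (j + 1), dd (j + 1) t =
          dd (j + 1) 0 + ∑ t ∈ Finset.Icc 0 j, dd (j + 1) (t + 1) := by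
        rw [Finset.Icc_eq_cons_Ioc (Nat.zero_le _), Finset.sum_cons, ← Finset.Icc_add_one_left_eq_Ioc,
          sum_Icc_succ_shift]
      have e0 : j - 0 + 1 = j + 1 := by omega
      have hL : ∑ t ∈ Finset.Icc 0 j, dd (j + 1) (t + 1) =
          ∑ i ∈ range (j + 1), catalan i * dd (j + 1 - i) 1 := by
        rw [dd_expand ihj.2 (Nat.zero_le j), e0]
      have e2 : j + 1 - 0 + 1 = j + 2 := by omega
      have hR : ∑ i ∈ range (j + 2), catalan i * dd (j + 1 - i) 0 =
          (∑ i ∈ range (j + 1), catalan i * catalan (j - i + 1)) +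
            (∑ i ∈ range (j + 1), catalan i * dd (j + 1 - i) 1) + catalan (j + 1) := by
        rw [Finset.sum_range_succ, Nat.sub_self]
        have hdd0 : dd 0 0 = 1 := by rw [dd]
        rw [hdd0, mul_one]
        have hsplit2 : ∀ i ∈ range (j + 1),
            catalan i * dd (j + 1 - i) 0 =
              catalan i * catalan (j - i + 1) + catalan i * dd (j + 1 - i) 1 := by
          intro i hi
          rw [Finset.mem_range] at hi
          have h3 : j + 1 - i = (j - i) + 1 := by omega
          rw [h3, dd_succ_zero, Nat.mul_add, G (j - i) (by omega)]
        rw [Finset.sum_congr rfl hsplit2, Finset.sum_add_distrib]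
      rw [split, hL, e2, hR, P1, hcat]
      ring

/-! ### basic path lemmas -/

lemma pathLast_nil (x : AGVert) : pathLast x [] = x := rfl

lemma pathLast_cons (x y : AGVert) (l : List AGVert) :
    pathLast x (y :: l) = pathLast y l := by
  simp [pathLast, List.getLast_cons]

lemma pathLast_append (x : AGVert) (l1 l2 : List AGVert) :
    pathLast x (l1 ++ l2) = pathLast (pathLast x l1) l2 := by
  induction l1 generalizing x with
  | nil => simp [pathLast_nil]
  | cons y l1 ih => rw [List.cons_append, pathLast_cons, pathLast_cons, ih]

lemma pathLast_concat (x v : AGVert) (l : List AGVert) :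
    pathLast x (l ++ [v]) = v := by
  rw [pathLast_append]
  rfl

lemma chain_cons_iff {R : AGVert → AGVert → Prop} {a b : AGVert} {l : List AGVert} :
    List.Chain R a (b :: l) ↔ R a b ∧ List.Chain R b l := List.isChain_cons_cons

lemma chain_append (R : AGVert → AGVert → Prop) (x : AGVert) (l1 l2 : List AGVert) :
    List.Chain R x (l1 ++ l2) ↔ List.Chain R x l1 ∧ List.Chain R (pathLast x l1) l2 := by
  induction l1 generalizing x with
  | nil => simp [pathLast_nil, List.Chain.nil]
  | cons y l1 ih =>
    rw [List.cons_append, chain_cons_iff, chain_cons_iff, ih, pathLast_cons, and_assoc]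

/-! ### structure of action graphs -/

def newV (k : ℕ) : Set AGVert :=
  { w | ∃ a l, a ∈ (actionGraph k).1 ∧ IsPath (actionGraph k).2 a l ∧
      (pathLast a l).label = k ∧ w = AGVert.node (k + 1) a l }

def newE (k : ℕ) : Set (AGVert × AGVert) :=
  { e | ∃ a l, a ∈ (actionGraph k).1 ∧ IsPath (actionGraph k).2 a l ∧
      (pathLast a l).label = k ∧ e = (a, AGVert.node (k + 1) a l) }

lemma ag_succ_fst (k : ℕ) : (actionGraph (k + 1)).1 = (actionGraph k).1 ∪ newV k := rfl

lemma ag_succ_snd (k : ℕ) : (actionGraph (k + 1)).2 = (actionGraph k).2 ∪ newE k := rfl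

lemma label_le {k : ℕ} {v : AGVert} (hv : v ∈ (actionGraph k).1) : v.label ≤ k := by
  induction k with
  | zero =>
    simp only [actionGraph, Set.mem_singleton_iff] at hv
    subst hv; rfl
  | succ k ih =>
    rw [ag_succ_fst] at hv
    rcases hv with hv | hv
    · exact le_trans (ih hv) (Nat.le_succ k)
    · obtain ⟨a, l, -, -, -, rfl⟩ := hv
      exact le_refl _

lemma edge_spec {k : ℕ} {e : AGVert × AGVert} (he : e ∈ (actionGraph k).2) :
    e.1 ∈ (actionGraph k).1 ∧ e.2 ∈ (actionGraph k).1 ∧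
      e.1.label < e.2.label ∧ e.2.label ≤ k := by
  induction k with
  | zero => simp only [actionGraph, Set.mem_empty_iff_false] at he
  | succ k ih =>
    rw [ag_succ_snd] at he
    rcases he with he | he
    · obtain ⟨h1, h2, h3, h4⟩ := ih he
      rw [ag_succ_fst]
      exact ⟨Or.inl h1, Or.inl h2, h3, le_trans h4 (Nat.le_succ k)⟩
    · obtain ⟨a, l, ha, hl, hll, rfl⟩ := he
      rw [ag_succ_fst]
      refine ⟨Or.inl ha, Or.inr ⟨a, l, ha, hl, hll, rfl⟩, ?_, le_refl _⟩
      exact Nat.lt_succ_of_le (label_le ha)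

lemma pathLast_mem {k : ℕ} {x : AGVert} {m : List AGVert}
    (hx : x ∈ (actionGraph k).1) (h : IsPath (actionGraph k).2 x m) :
    pathLast x m ∈ (actionGraph k).1 := by
  induction m generalizing x with
  | nil => exact hx
  | cons y m ih =>
    rw [IsPath, chain_cons_iff] at h
    rw [pathLast_cons]
    exact ih (edge_spec h.1).2.1 h.2

lemma path_len {k : ℕ} {x : AGVert} {m : List AGVert}
    (h : IsPath (actionGraph k).2 x m) :
    x.label + m.length ≤ (pathLast x m).label := by
  induction m generalizing x with
  | nil => simp [pathLast_nil]
  | cons y m ih =>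
    rw [IsPath, chain_cons_iff] at h
    rw [pathLast_cons]
    have h1 : x.label < y.label := (edge_spec h.1).2.2.1
    have h2 := ih h.2
    simp only [List.length_cons]
    omega

lemma mem_of_label_le {k : ℕ} {v : AGVert} (hv : v ∈ (actionGraph (k + 1)).1)
    (hl : v.label ≤ k) : v ∈ (actionGraph k).1 := by
  rw [ag_succ_fst] at hv
  rcases hv with hv | hv
  · exact hv
  · obtain ⟨a, l, -, -, -, rfl⟩ := hv
    exact absurd hl (by simp [AGVert.label])

lemma chain_down {k : ℕ} {m : List AGVert} {x : AGVert}
    (hc : List.Chain (fun a b => (a, b) ∈ (actionGraph (k + 1)).2) x m)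
    (hl : (pathLast x m).label ≤ k) :
    x.label ≤ k ∧ List.Chain (fun a b => (a, b) ∈ (actionGraph k).2) x m := by
  induction m generalizing x with
  | nil => exact ⟨hl, List.Chain.nil⟩
  | cons y m ih =>
    rw [chain_cons_iff] at hc
    obtain ⟨hxy, hc'⟩ := hc
    rw [pathLast_cons] at hl
    obtain ⟨hy, hchain⟩ := ih hc' hl
    have hxyk : (x, y) ∈ (actionGraph k).2 := by
      rw [ag_succ_snd] at hxy
      rcases hxy with hxy | hxy
      · exact hxy
      · obtain ⟨a, l, -, -, -, heq⟩ := hxy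
        have : y = AGVert.node (k + 1) a l := congrArg Prod.snd heq
        rw [this] at hy
        simp [AGVert.label] at hy
    have hx : x.label ≤ k := by
      have h5 : x.label < y.label ∧ y.label ≤ k := (edge_spec hxyk).2.2
      omega
    exact ⟨hx, chain_cons_iff.mpr ⟨hxyk, hchain⟩⟩

/-! ### the path sets -/

def Q (k n : ℕ) : Set (AGVert × List AGVert) :=
  {p | p.1 ∈ (actionGraph k).1 ∧ IsPath (actionGraph k).2 p.1 p.2 ∧
    (pathLast p.1 p.2).label = k ∧ n ≤ p.2.length}

def ff (k : ℕ) : (AGVert × List AGVert) × ℕ → AGVert × List AGVert :=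
  fun rs => (rs.1.1, rs.1.2.take rs.2 ++
    [AGVert.node (k + 1) (pathLast rs.1.1 (rs.1.2.take rs.2)) (rs.1.2.drop rs.2)])

def PS (k n : ℕ) : Set ((AGVert × List AGVert) × ℕ) :=
  {rs | rs.1 ∈ Q k 0 ∧ n ≤ rs.2 ∧ rs.2 ≤ rs.1.2.length}

lemma Q_len_le {k n : ℕ} {p : AGVert × List AGVert} (hp : p ∈ Q k n) :
    p.2.length ≤ k := by
  obtain ⟨h1, h2, h3, -⟩ := hp
  have := path_len h2
  omega

lemma Q_eq_empty {k n : ℕ} (h : k < n) : Q k n = ∅ := by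
  ext p
  simp only [Set.mem_empty_iff_false, iff_false]
  intro hp
  have := Q_len_le hp
  have := hp.2.2.2
  omega

lemma Q_zero : Q 0 0 = {(AGVert.root, [])} := by
  ext ⟨x, m⟩
  constructor
  · rintro ⟨h1, h2, -, -⟩
    simp only [actionGraph, Set.mem_singleton_iff] at h1
    subst h1
    cases m with
    | nil => rfl
    | cons y m =>
      rw [IsPath, chain_cons_iff] at h2
      simp only [actionGraph, Set.mem_empty_iff_false] at h2
      exact absurd h2.1 (fun h => h)
  · rintro h
    rw [Set.mem_singleton_iff, Prod.ext_iff] at h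
    obtain ⟨h1, h2⟩ := h
    simp only at h1 h2
    subst h1; subst h2
    refine ⟨rfl, List.Chain.nil, rfl, by simp⟩

/-- the main decomposition: nontrivial paths ending at a new vertex -/
lemma S1 (k n : ℕ) : Q (k + 1) (n + 1) = ff k '' PS k n := by
  ext ⟨x, m⟩
  constructor
  · rintro ⟨hx, hc, hlbl, hlen⟩
    have hmne : m ≠ [] := by
      intro h; rw [h] at hlen; simp at hlen
    obtain ⟨m', v, rfl⟩ : ∃ m' v, m = m' ++ [v] := ⟨m.dropLast, m.getLast hmne, by
      rw [List.dropLast_append_getLast hmne]⟩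
    rw [pathLast_concat] at hlbl
    rw [IsPath, chain_append] at hc
    obtain ⟨hc1, hc2⟩ := hc
    rw [chain_cons_iff] at hc2
    have hev : (pathLast x m', v) ∈ (actionGraph (k + 1)).2 := hc2.1
    -- the last edge must be a new edge
    have hnew : (pathLast x m', v) ∈ newE k := by
      rw [ag_succ_snd] at hev
      rcases hev with hev | hev
      · have h5 : v.label ≤ k := (edge_spec hev).2.2.2
        omega
      · exact hev
    obtain ⟨a, l, ha, hal, hall, heq⟩ := hnew
    have hax : pathLast x m' = a := congrArg Prod.fst heq
    have hveq : v = AGVert.node (k + 1) a l := congrArg Prod.snd heq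
    -- downgrade the prefix
    have hdown := chain_down hc1 (by rw [hax]; exact label_le ha)
    refine ⟨((x, m' ++ l), m'.length), ⟨⟨?_, ?_, ?_, by simp⟩, by simp at hlen ⊢; omega, by simp⟩, ?_⟩
    · exact mem_of_label_le hx hdown.1
    · rw [IsPath, chain_append]
      exact ⟨hdown.2, by rw [hax]; exact hal⟩
    · rw [pathLast_append, hax, hall]
    · show (x, (m' ++ l).take m'.length ++ [_]) = (x, m' ++ [v])
      have ht : (m' ++ l).take m'.length = m' := by
        rw [List.take_left]
      have hd : (m' ++ l).drop m'.length = l := by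
        rw [List.drop_left]
      simp only [ff, ht, hd, Prod.mk.injEq, true_and]
      rw [hax, hveq]
  · rintro ⟨⟨⟨x, w⟩, s⟩, ⟨⟨hx, hc, hlbl, -⟩, hns, hsw⟩, heq⟩
    rw [← heq]
    simp only at hx hc hlbl hsw hns
    show (x, w.take s ++ [AGVert.node (k + 1) (pathLast x (w.take s)) (w.drop s)]) ∈
      Q (k + 1) (n + 1)
    have hw : w = w.take s ++ w.drop s := (List.take_append_drop s w).symm
    rw [IsPath, hw, chain_append] at hc
    obtain ⟨hc1, hc2⟩ := hc
    set a := pathLast x (w.take s) with ha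
    have hamem : a ∈ (actionGraph k).1 := pathLast_mem hx hc1
    have hlast : (pathLast a (w.drop s)).label = k := by
      rw [hw, pathLast_append] at hlbl
      exact hlbl
    refine ⟨?_, ?_, ?_, ?_⟩
    · rw [ag_succ_fst]; exact Or.inl hx
    · rw [IsPath, chain_append]
      constructor
      · exact List.Chain.imp (fun p q hpq => by rw [ag_succ_snd]; exact Or.inl hpq) hc1
      · rw [chain_cons_iff]
        refine ⟨?_, List.Chain.nil⟩
        rw [ag_succ_snd]
        exact Or.inr ⟨a, w.drop s, hamem, hc2, hlast, rfl⟩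
    · rw [pathLast_concat]
      rfl
    · simp only [List.length_append, List.length_take, List.length_cons, List.length_nil]
      omega

lemma ff_injOn (k n : ℕ) : Set.InjOn (ff k) (PS k n) := by
  rintro ⟨⟨x, w⟩, s⟩ ⟨-, -, hsw⟩ ⟨⟨x', w'⟩, s'⟩ ⟨-, -, hsw'⟩ heq
  simp only at hsw hsw'
  simp only [ff, Prod.mk.injEq] at heq
  obtain ⟨hx, hl⟩ := heq
  subst hx
  have hlen : (w.take s).length = (w'.take s').length := by
    have h6 := congrArg List.length hl
    simp only [List.length_append, List.length_cons, List.length_nil, List.length_take]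
      at h6 ⊢
    omega
  obtain ⟨h1, h2⟩ := List.append_inj hl hlen
  have hss : s = s' := by
    have := congrArg List.length h1
    simp only [List.length_take] at this
    omega
  subst hss
  have h3 : w.drop s = w'.drop s := by
    simp only [List.cons.injEq, AGVert.node.injEq] at h2
    exact h2.1.2.2
  have hww : w = w' := by
    rw [← List.take_append_drop s w, ← List.take_append_drop s w', h1, h3]
  rw [hww]

lemma gg_inj (k : ℕ) : Function.Injective
    (fun r : AGVert × List AGVert => ((AGVert.node (k + 1) r.1 r.2, []) : AGVert × List AGVert)) := by
  rintro ⟨a, l⟩ ⟨a', l'⟩ heq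
  simp only [Prod.mk.injEq, AGVert.node.injEq] at heq
  exact Prod.ext heq.1.2.1 heq.1.2.2

lemma S3 (k : ℕ) : Q (k + 1) 0 =
    ((fun r : AGVert × List AGVert => ((AGVert.node (k + 1) r.1 r.2, []) : AGVert × List AGVert)) ''
      Q k 0) ∪ Q (k + 1) 1 := by
  ext ⟨x, m⟩
  constructor
  · rintro ⟨hx, hc, hlbl, -⟩
    cases m with
    | cons y m => exact Or.inr ⟨hx, hc, hlbl, by simp⟩
    | nil =>
      left
      rw [pathLast_nil] at hlbl
      have hxnew : x ∈ newV k := by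
        rw [ag_succ_fst] at hx
        rcases hx with hx | hx
        · have := label_le hx; omega
        · exact hx
      obtain ⟨a, l, ha, hal, hall, rfl⟩ := hxnew
      exact ⟨(a, l), ⟨ha, hal, hall, by simp⟩, rfl⟩
  · rintro (⟨⟨a, l⟩, ⟨ha, hal, hall, -⟩, heq⟩ | ⟨hx, hc, hlbl, -⟩)
    · simp only at ha hal hall
      rw [← heq]
      refine ⟨?_, List.Chain.nil, ?_, by simp⟩
      · rw [ag_succ_fst]; exact Or.inr ⟨a, l, ha, hal, hall, rfl⟩
      · rfl
    · exact ⟨hx, hc, hlbl, by simp⟩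

lemma S2 (k n : ℕ) : PS k n =
    ((fun r : AGVert × List AGVert => (r, n)) '' Q k n) ∪ PS k (n + 1) := by
  ext ⟨⟨x, w⟩, s⟩
  constructor
  · rintro ⟨hr, hns, hsw⟩
    rcases Nat.eq_or_lt_of_le hns with h | h
    · left
      obtain ⟨h1, h2, h3, -⟩ := hr
      exact ⟨(x, w), ⟨h1, h2, h3, by simp only at hsw ⊢; omega⟩, by rw [h]⟩
    · exact Or.inr ⟨hr, h, hsw⟩
  · rintro (⟨⟨x', w'⟩, ⟨h1, h2, h3, h4⟩, heq⟩ | ⟨hr, hns, hsw⟩)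
    · simp only [Prod.mk.injEq] at heq
      obtain ⟨⟨rfl, rfl⟩, rfl⟩ := heq
      exact ⟨⟨h1, h2, h3, by simp⟩, le_refl _, h4⟩
    · exact ⟨hr, le_of_lt (Nat.lt_of_succ_le hns), hsw⟩

lemma PS_subset (k n : ℕ) : PS k n ⊆ (Q k 0) ×ˢ (Set.Iic k) := by
  rintro ⟨r, s⟩ ⟨hr, -, hsw⟩
  exact ⟨hr, le_trans hsw (Q_len_le hr)⟩

lemma Q_finite : ∀ k n : ℕ, (Q k n).Finite := by
  have h0 : ∀ k, (Q k 0).Finite := by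
    intro k
    induction k with
    | zero => rw [Q_zero]; exact Set.finite_singleton _
    | succ k ih =>
      rw [S3]
      refine Set.Finite.union (ih.image _) ?_
      rw [S1]
      refine Set.Finite.image _ (Set.Finite.subset ?_ (PS_subset k 0))
      exact Set.Finite.prod ih (Set.finite_Iic k)
  intro k n
  exact (h0 k).subset fun p hp => ⟨hp.1, hp.2.1, hp.2.2.1, by simp⟩

lemma PS_finite (k n : ℕ) : (PS k n).Finite :=
  Set.Finite.subset (Set.Finite.prod (Q_finite k 0) (Set.finite_Iic k)) (PS_subset k n)

lemma card_PS (k n : ℕ) : (PS k n).ncard = (Q k n).ncard + (PS k (n + 1)).ncard := by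
  rw [S2, Set.ncard_union_eq ?disj ((Q_finite k n).image _) (PS_finite k (n + 1)),
    Set.ncard_image_of_injective _ (fun a b h => (Prod.ext_iff.mp h).1)]
  case disj =>
    rw [Set.disjoint_left]
    rintro ⟨r, s⟩ ⟨r', -, heq⟩ ⟨-, hns, -⟩
    have hsn : n = s := congrArg Prod.snd heq
    omega

lemma card_Q_succ_succ (k n : ℕ) :
    (Q (k + 1) (n + 1)).ncard = (Q k n).ncard + (Q (k + 1) (n + 2)).ncard := by
  rw [S1, Set.ncard_image_of_injOn (ff_injOn k n), card_PS, S1,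
    Set.ncard_image_of_injOn (ff_injOn k (n + 1))]

lemma card_Q_succ_zero (k : ℕ) :
    (Q (k + 1) 0).ncard = (Q k 0).ncard + (Q (k + 1) 1).ncard := by
  rw [S3, Set.ncard_union_eq ?disj ((Q_finite k 0).image _) (Q_finite (k + 1) 1),
    Set.ncard_image_of_injective _ (gg_inj k)]
  case disj =>
    rw [Set.disjoint_left]
    rintro ⟨x, m⟩ ⟨r', -, heq⟩ ⟨-, -, -, hlen⟩
    have : m = [] := (Prod.ext_iff.mp heq).2.symm
    rw [this] at hlen
    simp at hlen


lemma card_Q : ∀ k n : ℕ, (Q k n).ncard = dd k n := by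
  intro k
  induction k with
  | zero =>
    intro n
    match n with
    | 0 => rw [Q_zero, Set.ncard_singleton]; rw [dd]
    | n + 1 => rw [Q_eq_empty (by omega), dd_eq_zero (by omega), Set.ncard_empty]
  | succ k ih =>
    have key : ∀ m n : ℕ, k + 2 ≤ n + m → (Q (k + 1) n).ncard = dd (k + 1) n := by
      intro m
      induction m with
      | zero =>
        intro n hn
        rw [Q_eq_empty (by omega), dd_eq_zero (by omega), Set.ncard_empty]
      | succ m ihm =>
        intro n hn
        by_cases hbig : k + 2 ≤ n
        · rw [Q_eq_empty (by omega), dd_eq_zero (by omega), Set.ncard_empty]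
        · match n with
          | 0 => rw [card_Q_succ_zero, dd_succ_zero, ih 0, ihm 1 (by omega)]
          | n + 1 =>
            rw [card_Q_succ_succ, dd_pascal k n (by omega), ih n, ihm (n + 2) (by omega)]
    intro n
    exact key (k + 2) n (by omega)

/-- The total number of directed paths in `A k` whose terminal vertex is labeled `k`
(including the trivial path at each vertex labeled `k`) is the `(k+1)`st Catalan
number. -/
theorem stmt_4 (k : ℕ) :
    {p : AGVert × List AGVert | p.1 ∈ (actionGraph k).1 ∧
      IsPath (actionGraph k).2 p.1 p.2 ∧ (pathLast p.1 p.2).label = k}.ncard =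
      catalan (k + 1) := by
  have h1 : {p : AGVert × List AGVert | p.1 ∈ (actionGraph k).1 ∧
      IsPath (actionGraph k).2 p.1 p.2 ∧ (pathLast p.1 p.2).label = k} = Q k 0 := by
    ext p
    simp only [Q, Set.mem_setOf_eq, Nat.zero_le, and_true]
  rw [h1, card_Q, (dd_phi k).1]
end

section
/- For every natural number k, the underlying undirected graph of the action graph A_k is a tree (connected, with no loops, multiple edges, or cycles), and the vertices of A_{k+1} that are not vertices of A_k are precisely the leaves of A_{k+1} when A_{k+1} is viewed as a rooted tree with root the vertex labeled 0. -/
lemma ag_root_mem : ∀ k, AGVert.root ∈ (actionGraph k).1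
  | 0 => rfl
  | k + 1 => Or.inl (ag_root_mem k)

lemma ag_label_le : ∀ k, ∀ {v}, v ∈ (actionGraph k).1 → v.label ≤ k
  | 0, v, hv => by rw [show v = AGVert.root from hv]; exact le_rfl
  | k + 1, v, hv => by
    rcases hv with hv | ⟨a, l, _, _, _, rfl⟩
    · exact (ag_label_le k hv).trans (Nat.le_succ k)
    · exact le_rfl

lemma ag_edge_spec : ∀ k, ∀ {v w}, (v, w) ∈ (actionGraph k).2 →
    v ∈ (actionGraph k).1 ∧ w ∈ (actionGraph k).1 ∧ v.label < w.label ∧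
      ∃ l, w = AGVert.node w.label v l
  | 0, v, w, h => absurd h (Set.notMem_empty _)
  | k + 1, v, w, h => by
    rcases h with h | ⟨a, l, ha, hp, hl, he⟩
    · obtain ⟨h1, h2, h3, h4⟩ := ag_edge_spec k h
      exact ⟨Or.inl h1, Or.inl h2, h3, h4⟩
    · have hv : v = a := congrArg Prod.fst he
      have hw : w = AGVert.node (k + 1) a l := congrArg Prod.snd he
      subst hv; subst hw
      refine ⟨Or.inl ha, Or.inr ⟨v, l, ha, hp, hl, rfl⟩, ?_, ⟨l, rfl⟩⟩
      have := ag_label_le k ha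
      show v.label < k + 1
      omega

lemma ag_mem_self_label : ∀ k, ∀ {v}, v ∈ (actionGraph k).1 → v ∈ (actionGraph v.label).1
  | 0, v, hv => by rw [show v = AGVert.root from hv]; exact ag_root_mem 0
  | k + 1, v, hv => by
    rcases hv with hv | ⟨a, l, ha, hp, hl, rfl⟩
    · exact ag_mem_self_label k hv
    · exact Or.inr ⟨a, l, ha, hp, hl, rfl⟩

lemma ag_label_eq_zero : ∀ k, ∀ {v}, v ∈ (actionGraph k).1 → v.label = 0 → v = AGVert.root
  | 0, v, hv, _ => hv
  | k + 1, v, hv, h0 => by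
    rcases hv with hv | ⟨a, l, _, _, _, rfl⟩
    · exact ag_label_eq_zero k hv h0
    · simp [AGVert.label] at h0

lemma ag_parent_edge : ∀ k, ∀ {v}, v ∈ (actionGraph k).1 → v ≠ AGVert.root →
    ∃ u, (u, v) ∈ (actionGraph k).2
  | 0, v, hv, hne => absurd hv hne
  | k + 1, v, hv, hne => by
    rcases hv with hv | ⟨a, l, ha, hp, hl, rfl⟩
    · obtain ⟨u, hu⟩ := ag_parent_edge k hv hne
      exact ⟨u, Or.inl hu⟩
    · exact ⟨a, Or.inr ⟨a, l, ha, hp, hl, rfl⟩⟩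

lemma ag_E_mono {k n : ℕ} (h : k ≤ n) : (actionGraph k).2 ⊆ (actionGraph n).2 := by
  induction n, h using Nat.le_induction with
  | base => exact subset_rfl
  | succ n hn ih => exact fun x hx => Or.inl (ih hx)

lemma ag_child_edge {k : ℕ} {v : AGVert} (hv : v ∈ (actionGraph k).1) :
    (v, AGVert.node (v.label + 1) v []) ∈ (actionGraph (v.label + 1)).2 :=
  Or.inr ⟨v, [], ag_mem_self_label k hv, List.Chain.nil, rfl, rfl⟩
open SimpleGraph

/-- Connectivity from a level function. -/
lemma connected_of_level {α : Type*} (G : SimpleGraph α) (m : α → ℕ) (r : α)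
    (h0 : ∀ a, m a = 0 → a = r)
    (hs : ∀ a, m a ≠ 0 → ∃ b, G.Adj a b ∧ m b < m a) : G.Connected := by
  have key : ∀ n a, m a ≤ n → G.Reachable a r := by
    intro n
    induction n with
    | zero => intro a ha; rw [h0 a (Nat.le_zero.mp ha)]
    | succ n ih =>
      intro a ha
      by_cases h : m a = 0
      · rw [h0 a h]
      · obtain ⟨b, hab, hb⟩ := hs a h
        exact hab.reachable.trans (ih b (by omega))
  have : Nonempty α := ⟨r⟩
  exact ⟨fun a b => (key (m a) a le_rfl).trans (key (m b) b le_rfl).symm⟩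

lemma no_cycle_at_max {α : Type*} {G : SimpleGraph α} {m : α → ℕ}
    (hne : ∀ a b, G.Adj a b → m a ≠ m b)
    (huniq : ∀ a b c, G.Adj a b → G.Adj a c → m b < m a → m c < m a → b = c)
    {v : α} (c : G.Walk v v) (hc : c.IsCycle)
    (hmax : ∀ x ∈ c.support, m x ≤ m v) : False := by
  have hnn : ¬ c.Nil := by
    have := hc.three_le_length
    rw [Walk.nil_iff_length_eq]; omega
  obtain ⟨x, hvx, p, rfl⟩ := Walk.not_nil_iff.mp hnn
  have hpn : ¬ p.reverse.Nil := by
    have := hc.three_le_length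
    rw [Walk.nil_iff_length_eq, Walk.length_reverse]
    simp only [Walk.length_cons] at this
    omega
  obtain ⟨y, hvy, q, hq⟩ := Walk.not_nil_iff.mp hpn
  have hxs : x ∈ (Walk.cons hvx p).support := by
    simp [Walk.support_cons]
  have hyp : y ∈ p.support := by
    have : y ∈ p.reverse.support := by rw [hq]; simp [Walk.support_cons]
    rwa [Walk.support_reverse, List.mem_reverse] at this
  have hys : y ∈ (Walk.cons hvx p).support := by
    simp [Walk.support_cons, hyp]
  have hmx : m x < m v := lt_of_le_of_ne (hmax x hxs) (fun h => hne v x hvx h.symm)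
  have hmy : m y < m v := lt_of_le_of_ne (hmax y hys) (fun h => hne v y hvy h.symm)
  have hxy : x = y := huniq v x y hvx hvy hmx hmy
  -- edge contradiction
  have hnd := hc.edges_nodup
  rw [Walk.edges_cons] at hnd
  have hmem : s(v, y) ∈ p.edges := by
    have : s(v, y) ∈ p.reverse.edges := by rw [hq]; simp [Walk.edges_cons]
    rwa [Walk.edges_reverse, List.mem_reverse] at this
  rw [← hxy] at hmem
  exact (List.nodup_cons.mp hnd).1 hmem

lemma isAcyclic_of_level {α : Type*} (G : SimpleGraph α) (m : α → ℕ)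
    (hne : ∀ a b, G.Adj a b → m a ≠ m b)
    (huniq : ∀ a b c, G.Adj a b → G.Adj a c → m b < m a → m c < m a → b = c) :
    G.IsAcyclic := by
  classical
  intro u c hc
  obtain ⟨v, hv, hmax⟩ := Finset.exists_max_image c.support.toFinset m
    ⟨u, by simp [Walk.start_mem_support]⟩
  rw [List.mem_toFinset] at hv
  have hc' := hc.rotate hv
  have hmax' : ∀ x ∈ (c.rotate v hv).support, m x ≤ m v := by
    intro x hx
    rw [(c.rotate v hv).support_eq_cons] at hx
    rcases List.mem_cons.mp hx with rfl | hx
    · exact le_rfl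
    · have : x ∈ c.support.tail := ((Walk.support_rotate c v hv).perm.mem_iff).mp hx
      exact hmax x (List.mem_toFinset.mpr (List.mem_of_mem_tail this))
  exact no_cycle_at_max hne huniq _ hc' hmax'

/-- The underlying undirected graph of `A k` is a tree (no loops, no multiple edges,
connected, acyclic), and the vertices of `A (k+1)` not in `A k` are precisely the
leaves of `A (k+1)` viewed as a rooted tree with root the vertex labeled 0, i.e. the
non-root vertices of valence 1. -/
theorem stmt_9 (k : ℕ) :
    (∀ v : AGVert, (v, v) ∉ (actionGraph k).2) ∧
    (∀ v w : AGVert, (v, w) ∈ (actionGraph k).2 → (w, v) ∉ (actionGraph k).2) ∧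
    (SimpleGraph.fromRel fun a b : (actionGraph k).1 =>
      ((a : AGVert), (b : AGVert)) ∈ (actionGraph k).2).IsTree ∧
    (∀ v : (actionGraph (k + 1)).1,
      (v : AGVert) ∉ (actionGraph k).1 ↔
        (((SimpleGraph.fromRel fun a b : (actionGraph (k + 1)).1 =>
            ((a : AGVert), (b : AGVert)) ∈ (actionGraph (k + 1)).2).neighborSet
          v).ncard = 1 ∧ (v : AGVert).label ≠ 0)) := by
  refine ⟨?_, ?_, ⟨?_, ?_⟩, ?_⟩
  · intro v hv
    exact lt_irrefl _ (ag_edge_spec k hv).2.2.1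
  · intro v w hvw hwv
    have h1 := (ag_edge_spec k hvw).2.2.1
    have h2 := (ag_edge_spec k hwv).2.2.1
    omega
  · -- connected
    refine connected_of_level _ (fun v => (v : AGVert).label) ⟨AGVert.root, ag_root_mem k⟩ ?_ ?_
    · intro a ha
      exact Subtype.ext (ag_label_eq_zero k a.2 ha)
    · intro a ha
      have hne : (a : AGVert) ≠ AGVert.root := fun h =>
        ha (show ((a : AGVert)).label = 0 by rw [h]; rfl)
      obtain ⟨u, hu⟩ := ag_parent_edge k a.2 hne
      obtain ⟨huV, _, hlt, _⟩ := ag_edge_spec k hu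
      refine ⟨⟨u, huV⟩, (SimpleGraph.fromRel_adj _ _ _).mpr ⟨?_, Or.inr hu⟩, hlt⟩
      intro h
      rw [h] at hlt
      exact lt_irrefl _ hlt
  · -- acyclic
    refine isAcyclic_of_level _ (fun v => (v : AGVert).label) ?_ ?_
    · intro a b hab
      rcases ((SimpleGraph.fromRel_adj _ _ _).mp hab).2 with h | h
      · exact (ag_edge_spec k h).2.2.1.ne
      · exact (ag_edge_spec k h).2.2.1.ne'
    · intro a b c hab hac hb hc
      have hb' : (b : AGVert).label < (a : AGVert).label := hb
      have hc' : (c : AGVert).label < (a : AGVert).label := hc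
      rcases ((SimpleGraph.fromRel_adj _ _ _).mp hab).2 with h | h
      · have := (ag_edge_spec k h).2.2.1; omega
      obtain ⟨_, _, _, l1, he1⟩ := ag_edge_spec k h
      rcases ((SimpleGraph.fromRel_adj _ _ _).mp hac).2 with h' | h'
      · have := (ag_edge_spec k h').2.2.1; omega
      obtain ⟨_, _, _, l2, he2⟩ := ag_edge_spec k h'
      rw [he1] at he2
      injection he2 with _ h3 _
      exact Subtype.ext h3
  · -- leaf characterization
    intro v
    constructor
    · intro hv
      rcases v.2 with h | ⟨a, l, ha, hp, hl, hv_eq⟩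
      · exact absurd h hv
      have haV1 : a ∈ (actionGraph (k + 1)).1 := Or.inl ha
      have hlab : (v : AGVert).label = k + 1 := by rw [hv_eq]; rfl
      refine ⟨?_, by rw [hlab]; omega⟩
      have hedge : (a, (v : AGVert)) ∈ (actionGraph (k + 1)).2 :=
        Or.inr ⟨a, l, ha, hp, hl, by rw [hv_eq]⟩
      have hset : (SimpleGraph.fromRel fun a b : (actionGraph (k + 1)).1 =>
          ((a : AGVert), (b : AGVert)) ∈ (actionGraph (k + 1)).2).neighborSet v
          = {⟨a, haV1⟩} := by
        ext b
        simp only [SimpleGraph.mem_neighborSet, SimpleGraph.fromRel_adj, Set.mem_singleton_iff]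
        constructor
        · rintro ⟨hne, h | h⟩
          · exfalso
            rcases h with h | ⟨a', l', ha', _, _, he⟩
            · exact hv (ag_edge_spec k h).1
            · have hva : (v : AGVert) = a' := congrArg Prod.fst he
              exact hv (hva ▸ ha')
          · obtain ⟨_, _, _, l', he⟩ := ag_edge_spec (k + 1) h
            rw [hlab] at he
            rw [hv_eq] at he
            injection he with _ h3 _
            exact Subtype.ext h3.symm
        · rintro rfl
          refine ⟨?_, Or.inr hedge⟩
          intro h
          have hale := ag_label_le k ha
          rw [h] at hlab
          have : a.label = k + 1 := hlab
          omega
      rw [hset]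
      exact Set.ncard_singleton _
    · rintro ⟨hcard, hlab0⟩ hvk
      have hne : (v : AGVert) ≠ AGVert.root := fun h => hlab0 (by rw [h]; rfl)
      obtain ⟨u, hu⟩ := ag_parent_edge k hvk hne
      obtain ⟨huV, _, hult, _⟩ := ag_edge_spec k hu
      have hlk : (v : AGVert).label ≤ k := ag_label_le k hvk
      have hce : ((v : AGVert), AGVert.node ((v : AGVert).label + 1) (v : AGVert) [])
          ∈ (actionGraph (k + 1)).2 := ag_E_mono (by omega) (ag_child_edge hvk)
      have hcV := (ag_edge_spec (k + 1) hce).2.1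
      have huV' : u ∈ (actionGraph (k + 1)).1 := Or.inl huV
      have hu' : (u, (v : AGVert)) ∈ (actionGraph (k + 1)).2 := Or.inl hu
      obtain ⟨x, hx⟩ := Set.ncard_eq_one.mp hcard
      have h1 : (⟨u, huV'⟩ : (actionGraph (k + 1)).1) ∈
          (SimpleGraph.fromRel fun a b : (actionGraph (k + 1)).1 =>
            ((a : AGVert), (b : AGVert)) ∈ (actionGraph (k + 1)).2).neighborSet v := by
        rw [SimpleGraph.mem_neighborSet, SimpleGraph.fromRel_adj]
        refine ⟨?_, Or.inr hu'⟩
        intro h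
        rw [h] at hult
        exact lt_irrefl _ hult
      have h2 : (⟨AGVert.node ((v : AGVert).label + 1) (v : AGVert) [], hcV⟩ :
          (actionGraph (k + 1)).1) ∈
          (SimpleGraph.fromRel fun a b : (actionGraph (k + 1)).1 =>
            ((a : AGVert), (b : AGVert)) ∈ (actionGraph (k + 1)).2).neighborSet v := by
        rw [SimpleGraph.mem_neighborSet, SimpleGraph.fromRel_adj]
        refine ⟨?_, Or.inl hce⟩
        intro h
        have : (v : AGVert).label = (v : AGVert).label + 1 := by
          conv_lhs => rw [h]
          rfl
        omega
      rw [hx] at h1 h2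
      rw [Set.mem_singleton_iff] at h1 h2
      have huc : u = AGVert.node ((v : AGVert).label + 1) (v : AGVert) [] :=
        congrArg Subtype.val (h1.trans h2.symm)
      have : u.label = (v : AGVert).label + 1 := by rw [huc]; rfl
      omega
end
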